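/- Let ρ₀, ρ₁ be density operators with ‖ρ₀ − ρ₁‖₁ ≥ 2 − ε and let |ψ_{ρ_i}⟩_{RS} be purifications of ρ_i. Define |φ⟩ = (1/√2)(|0⟩_A|0⟩_B|ψ_{ρ₀}⟩_{RS} + |1⟩_A|1⟩_B|ψ_{ρ₁}⟩_{RS}) and ω_{A:BR} = Tr_S(|φ⟩⟨φ|). Then there exists a separable (across the A:BR cut) state σ with ‖ω_{A:BR} − σ‖₁ ≤ 2√ε. -/

import Mathlib

open Matrix Kronecker BigOperators ComplexOrder

noncomputable def traceNorm {n : Type*} [Fintype n] [DecidableEq n] (A : Matrix n n ℂ) : ℝ :=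
  (((Matrix.posSemidef_conjTranspose_mul_self A).1.eigenvectorUnitary : Matrix n n ℂ) *
    diagonal ((fun x : ℝ => (x : ℂ)) ∘ (√·) ∘ (Matrix.posSemidef_conjTranspose_mul_self A).1.eigenvalues) *
    (star (Matrix.posSemidef_conjTranspose_mul_self A).1.eigenvectorUnitary : Matrix n n ℂ)).trace.re

open scoped Classical in
noncomputable def matSqrt {n : Type*} [Fintype n] [DecidableEq n] (A : Matrix n n ℂ) : Matrix n n ℂ :=
  if h : A.PosSemidef then (h.1.eigenvectorUnitary : Matrix n n ℂ) *
    diagonal ((fun x : ℝ => (x : ℂ)) ∘ (√·) ∘ h.1.eigenvalues) * (star h.1.eigenvectorUnitary : Matrix n n ℂ) else 0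

noncomputable def fidelity {n : Type*} [Fintype n] [DecidableEq n] (ρ σ : Matrix n n ℂ) : ℝ :=
  (traceNorm (matSqrt ρ * matSqrt σ)) ^ 2

def IsDensity {n : Type*} [Fintype n] [DecidableEq n] (ρ : Matrix n n ℂ) : Prop :=
  ρ.PosSemidef ∧ ρ.trace = 1

def SeparableState {a b : Type*} [Fintype a] [Fintype b] [DecidableEq a] [DecidableEq b]
    (ρ : Matrix (a × b) (a × b) ℂ) : Prop :=
  ∃ (m : ℕ) (p : Fin m → ℝ) (σ : Fin m → Matrix a a ℂ) (τ : Fin m → Matrix b b ℂ),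
    (∀ i, 0 ≤ p i) ∧ (∑ i, p i = 1) ∧ (∀ i, IsDensity (σ i)) ∧ (∀ i, IsDensity (τ i)) ∧
    ρ = ∑ i, (p i : ℂ) • (σ i ⊗ₖ τ i)

noncomputable def permUnitary {b : Type*} [Fintype b] [DecidableEq b] {k : ℕ}
    (π : Equiv.Perm (Fin k)) : Matrix (Fin k → b) (Fin k → b) ℂ :=
  Equiv.Perm.permMatrix ℂ (Equiv.arrowCongr π (Equiv.refl b))

def IsKExtension {a b : Type*} [Fintype a] [Fintype b] [DecidableEq a] [DecidableEq b] (m : ℕ)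
    (ρ : Matrix (a × b) (a × b) ℂ)
    (ω : Matrix (a × (Fin (m + 1) → b)) (a × (Fin (m + 1) → b)) ℂ) : Prop :=
  ω.PosSemidef ∧ ω.trace = 1 ∧
  (∀ π : Equiv.Perm (Fin (m + 1)),
    ((1 : Matrix a a ℂ) ⊗ₖ permUnitary π) * ω * ((1 : Matrix a a ℂ) ⊗ₖ permUnitary π)ᴴ = ω) ∧
  (∀ p q : a × b, ρ p q = ∑ r : Fin m → b, ω (p.1, Fin.cons p.2 r) (q.1, Fin.cons q.2 r))

/-- `ρ` is `k`-extendible (with `k` copies of the `B` system). -/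
def IsKExtendible {a b : Type*} [Fintype a] [Fintype b] [DecidableEq a] [DecidableEq b] (k : ℕ)
    (ρ : Matrix (a × b) (a × b) ℂ) : Prop :=
  ∃ m : ℕ, k = m + 1 ∧ ∃ ω, IsKExtension m ρ ω

def IsPOVM {x b : Type*} [Fintype x] [Fintype b] [DecidableEq b] (Λ : x → Matrix b b ℂ) : Prop :=
  (∀ i, (Λ i).PosSemidef) ∧ ∑ i, Λ i = 1

noncomputable def povmOut {a b x : Type*} [Fintype a] [Fintype b] [Fintype x] [DecidableEq x]
    (Λ : x → Matrix b b ℂ) (X : Matrix (a × b) (a × b) ℂ) : Matrix (a × x) (a × x) ℂ :=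
  fun p q => if p.2 = q.2 then ∑ j : b, ∑ j' : b, (Λ p.2) j j' * X (p.1, j') (q.1, j) else 0

noncomputable def loccDist {a b : Type*} [Fintype a] [Fintype b] [DecidableEq a] [DecidableEq b]
    (ρ σ : Matrix (a × b) (a × b) ℂ) : ℝ :=
  sSup {r : ℝ | ∃ (x : Type) (_ : Fintype x) (_ : DecidableEq x) (Λ : x → Matrix b b ℂ),
    IsPOVM Λ ∧ r = traceNorm (povmOut Λ ρ - povmOut Λ σ)}

noncomputable def bellPhi {r s : Type*} (ψ : Fin 2 → (r × s) → ℂ) :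
    (Fin 2 × ((Fin 2 × r) × s)) → ℂ :=
  fun p => if p.1 = p.2.1.1 then ((Real.sqrt 2 : ℝ) : ℂ)⁻¹ * ψ p.1 (p.2.1.2, p.2.2) else 0

noncomputable def bellOmega {r s : Type*} [Fintype s] (ψ : Fin 2 → (r × s) → ℂ) :
    Matrix (Fin 2 × (Fin 2 × r)) (Fin 2 × (Fin 2 × r)) ℂ :=
  fun p q => ∑ v : s,
    bellPhi ψ (p.1, (p.2, v)) * (starRingEnd ℂ) (bellPhi ψ (q.1, (q.2, v)))

set_option linter.unusedSectionVars false
set_option linter.unusedVariables false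
set_option linter.unreachableTactic false
set_option linter.unusedTactic false
set_option maxHeartbeats 1000000

noncomputable def Matrix.PosSemidef.sqrt {n : Type*} [Fintype n] [DecidableEq n] {A : Matrix n n ℂ}
    (hA : A.PosSemidef) : Matrix n n ℂ :=
  (hA.1.eigenvectorUnitary : Matrix n n ℂ) *
    diagonal ((fun x : ℝ => (x : ℂ)) ∘ (√·) ∘ hA.1.eigenvalues) * (star hA.1.eigenvectorUnitary : Matrix n n ℂ)

section PsdSqrt
open scoped MatrixOrder
variable {n : Type*} [Fintype n] [DecidableEq n]

lemma traceNorm_eq_sqrt (A : Matrix n n ℂ) :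
    traceNorm A = (Matrix.posSemidef_conjTranspose_mul_self A).sqrt.trace.re := rfl

lemma Matrix.PosSemidef.sqrt_eq_cfc {A : Matrix n n ℂ} (hA : A.PosSemidef) :
    hA.sqrt = CFC.sqrt A := by
  rw [CFC.sqrt_eq_real_sqrt A (Matrix.nonneg_iff_posSemidef.mpr hA), cfcₙ_eq_cfc, hA.1.cfc_eq]
  rfl

lemma Matrix.PosSemidef.posSemidef_sqrt {A : Matrix n n ℂ} (hA : A.PosSemidef) :
    hA.sqrt.PosSemidef := by
  rw [hA.sqrt_eq_cfc]
  exact Matrix.nonneg_iff_posSemidef.mp (CFC.sqrt_nonneg A)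

lemma Matrix.PosSemidef.sqrt_mul_self {A : Matrix n n ℂ} (hA : A.PosSemidef) :
    hA.sqrt * hA.sqrt = A := by
  rw [hA.sqrt_eq_cfc]
  exact CFC.sqrt_mul_sqrt_self A (Matrix.nonneg_iff_posSemidef.mpr hA)

lemma Matrix.PosSemidef.eq_sqrt_of_sq_eq {B : Matrix n n ℂ} (hB : B.PosSemidef)
    {A : Matrix n n ℂ} (hA : A.PosSemidef) (h : B ^ 2 = A) : B = hA.sqrt := by
  rw [hA.sqrt_eq_cfc]
  exact (CFC.sqrt_unique (by rw [← pow_two]; exact h) (Matrix.nonneg_iff_posSemidef.mpr hB)).symm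

lemma Matrix.PosSemidef.sqrt_sq {A : Matrix n n ℂ} (hA : A.PosSemidef) {h2 : (A ^ 2).PosSemidef} :
    h2.sqrt = A :=
  (hA.eq_sqrt_of_sq_eq h2 rfl).symm

end PsdSqrt

namespace QAux

section Basic
variable {n : Type*} {m : Type*} [Fintype n] [DecidableEq n] [Fintype m] [DecidableEq m]

lemma trace_mul_conjTranspose_self_re (A : Matrix n m ℂ) :
    (A * Aᴴ).trace.re = ∑ i, ∑ j, Complex.normSq (A i j) := by
  have h : (A * Aᴴ).trace = ∑ i, ∑ j, (Complex.normSq (A i j) : ℂ) := by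
    simp only [Matrix.trace, Matrix.diag, Matrix.mul_apply, Matrix.conjTranspose_apply]
    refine Finset.sum_congr rfl fun i _ => Finset.sum_congr rfl fun j _ => ?_
    rw [RCLike.star_def, Complex.mul_conj]
  rw [h]
  push_cast
  simp [Complex.ofReal_re]

/-- Cauchy–Schwarz for traces. -/
lemma abs_trace_mul_le (A : Matrix n m ℂ) (B : Matrix m n ℂ) :
    ‖(A * B).trace‖ ≤
      Real.sqrt ((A * Aᴴ).trace.re) * Real.sqrt ((B * Bᴴ).trace.re) := by
  rw [trace_mul_conjTranspose_self_re, trace_mul_conjTranspose_self_re]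
  have h1 : (A * B).trace = ∑ p : n × m, A p.1 p.2 * B p.2 p.1 := by
    rw [Fintype.sum_prod_type]
    simp [Matrix.trace, Matrix.diag, Matrix.mul_apply]
  rw [h1]
  calc ‖∑ p : n × m, A p.1 p.2 * B p.2 p.1‖
      ≤ ∑ p : n × m, ‖A p.1 p.2‖ * ‖B p.2 p.1‖ := by
        refine (norm_sum_le _ _).trans_eq ?_
        exact Finset.sum_congr rfl fun p _ => norm_mul _ _
    _ ≤ Real.sqrt (∑ p : n × m, ‖A p.1 p.2‖ ^ 2) *
          Real.sqrt (∑ p : n × m, ‖B p.2 p.1‖ ^ 2) := by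
        have hcs := Finset.sum_mul_sq_le_sq_mul_sq Finset.univ
          (fun p : n × m => ‖A p.1 p.2‖) (fun p : n × m => ‖B p.2 p.1‖)
        have hnn : (0:ℝ) ≤ ∑ p : n × m, ‖A p.1 p.2‖ * ‖B p.2 p.1‖ :=
          Finset.sum_nonneg fun p _ => mul_nonneg (norm_nonneg _) (norm_nonneg _)
        calc (∑ p : n × m, ‖A p.1 p.2‖ * ‖B p.2 p.1‖)
            = Real.sqrt ((∑ p : n × m, ‖A p.1 p.2‖ * ‖B p.2 p.1‖) ^ 2) :=
              (Real.sqrt_sq hnn).symm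
          _ ≤ Real.sqrt ((∑ p : n × m, ‖A p.1 p.2‖ ^ 2) *
                ∑ p : n × m, ‖B p.2 p.1‖ ^ 2) := Real.sqrt_le_sqrt hcs
          _ = _ := Real.sqrt_mul (Finset.sum_nonneg fun p _ => sq_nonneg _) _
    _ = _ := by
        rw [Fintype.sum_prod_type, Fintype.sum_prod_type]
        congr 1
        · congr 1
          exact Finset.sum_congr rfl fun i _ => Finset.sum_congr rfl fun j _ => Complex.sq_norm _
        · rw [Finset.sum_comm]
          congr 1
          exact Finset.sum_congr rfl fun i _ => Finset.sum_congr rfl fun j _ => Complex.sq_norm _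

lemma psd_diag_nonneg {A : Matrix n n ℂ} (hA : A.PosSemidef) (i : n) : 0 ≤ A i i := by
  exact hA.diag_nonneg

lemma psd_trace_eq_re {A : Matrix n n ℂ} (hA : A.PosSemidef) :
    A.trace = (A.trace.re : ℂ) ∧ 0 ≤ A.trace.re := by
  have h : ∀ i, A i i = ((A i i).re : ℂ) ∧ 0 ≤ (A i i).re := by
    intro i
    have := psd_diag_nonneg hA i
    rw [Complex.le_def] at this
    obtain ⟨h1, h2⟩ := this
    exact ⟨Complex.ext rfl (by simpa using h2.symm), by simpa using h1⟩
  constructor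
  · rw [Matrix.trace]
    rw [Complex.re_sum]
    push_cast
    exact Finset.sum_congr rfl fun i _ => (h i).1
  · rw [Matrix.trace, Complex.re_sum]
    exact Finset.sum_nonneg fun i _ => (h i).2

lemma sqrt_congr {A B : Matrix n n ℂ} (h : A = B) (hA : A.PosSemidef) (hB : B.PosSemidef) :
    hA.sqrt = hB.sqrt := by subst h; rfl

lemma traceNorm_nonneg' (A : Matrix n n ℂ) : 0 ≤ traceNorm A :=
  (psd_trace_eq_re (Matrix.PosSemidef.posSemidef_sqrt (Matrix.posSemidef_conjTranspose_mul_self A))).2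

lemma trace_sqrt_eq (K : Matrix n n ℂ) :
    ((Matrix.posSemidef_conjTranspose_mul_self K).sqrt).trace = (traceNorm K : ℂ) :=
  (psd_trace_eq_re (Matrix.PosSemidef.posSemidef_sqrt _)).1


lemma exists_polar (K : Matrix n n ℂ) :
    ∃ V : Matrix n n ℂ, Vᴴ * V = 1 ∧ V * Vᴴ = 1 ∧
      K = V * (Matrix.posSemidef_conjTranspose_mul_self K).sqrt := by
  classical
  set hA := Matrix.posSemidef_conjTranspose_mul_self K with hAdef
  set hH : (Kᴴ * K).IsHermitian := hA.1 with hHdef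
  set U : Matrix n n ℂ := (Matrix.IsHermitian.eigenvectorUnitary hH : Matrix n n ℂ) with hUdef
  set d : n → ℝ := hH.eigenvalues with hddef
  have hU1 : star U * U = 1 :=
    Matrix.mem_unitaryGroup_iff'.mp (Matrix.IsHermitian.eigenvectorUnitary hH).2
  have hU2 : U * star U = 1 :=
    Matrix.mem_unitaryGroup_iff.mp (Matrix.IsHermitian.eigenvectorUnitary hH).2
  have hdiag : star U * (Kᴴ * K) * U = Matrix.diagonal (RCLike.ofReal ∘ d) := by
    have hs : Kᴴ * K = U * Matrix.diagonal (RCLike.ofReal ∘ d) * star U := hH.spectral_theorem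
    rw [hs]
    simp only [← mul_assoc, hU1, one_mul]
    rw [mul_assoc, hU1, mul_one]
  have hKU : ∀ i j, (∑ a, (starRingEnd ℂ) ((K * U) a i) * ((K * U) a j))
      = if i = j then (d i : ℂ) else 0 := by
    intro i j
    have h1 : ((K * U)ᴴ * (K * U)) i j = ∑ a, (starRingEnd ℂ) ((K * U) a i) * ((K * U) a j) := by
      rw [Matrix.mul_apply]
      simp only [Matrix.conjTranspose_apply, RCLike.star_def]
    have h2 : (K * U)ᴴ * (K * U) = star U * (Kᴴ * K) * U := by
      rw [Matrix.conjTranspose_mul, Matrix.star_eq_conjTranspose]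
      noncomm_ring
    rw [← h1, h2, hdiag]
    simp [Matrix.diagonal_apply, Function.comp]
  have hdnn : ∀ i, 0 ≤ d i := fun i => hA.eigenvalues_nonneg i
  set w : n → EuclideanSpace ℂ n := fun i =>
    (WithLp.equiv 2 _).symm (fun a => (((Real.sqrt (d i))⁻¹ : ℝ) : ℂ) * (K * U) a i) with hwdef
  have hworth : Orthonormal ℂ (Set.restrict {i | d i ≠ 0} w) := by
    rw [orthonormal_iff_ite]
    rintro ⟨i, hi⟩ ⟨j, hj⟩
    change (inner ℂ (w i) (w j) : ℂ) = _
    have hinner : (inner ℂ (w i) (w j) : ℂ) =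
        (((Real.sqrt (d i))⁻¹ : ℝ) : ℂ) * (((Real.sqrt (d j))⁻¹ : ℝ) : ℂ) *
          ∑ a, (starRingEnd ℂ) ((K * U) a i) * ((K * U) a j) := by
      rw [PiLp.inner_apply]
      simp only [hwdef, WithLp.equiv_symm_apply, PiLp.toLp_apply, RCLike.inner_apply]
      rw [Finset.mul_sum]
      refine Finset.sum_congr rfl fun a _ => ?_
      rw [map_mul (starRingEnd ℂ), Complex.conj_ofReal]
      ring
    by_cases hij : i = j
    · subst hij
      rw [hinner, hKU, if_pos rfl, if_pos rfl]
      have hdi : (0:ℝ) < d i := lt_of_le_of_ne (hdnn i) (Ne.symm hi)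
      have h1 : ((Real.sqrt (d i))⁻¹ : ℝ) * (Real.sqrt (d i))⁻¹ * d i = 1 := by
        rw [← mul_inv, Real.mul_self_sqrt hdi.le]
        exact inv_mul_cancel₀ (ne_of_gt hdi)
      norm_cast
    · rw [hinner, hKU, if_neg hij,
        if_neg (show (⟨i, hi⟩ : {i | d i ≠ 0}) ≠ ⟨j, hj⟩ from
          fun h => hij (congrArg Subtype.val h))]
      ring
  obtain ⟨b, hb⟩ := hworth.exists_orthonormalBasis_extension_of_card_eq
    (by simp [finrank_euclideanSpace])
  set Nt : Matrix n n ℂ := Matrix.of (fun a i => (b i : EuclideanSpace ℂ n) a) with hNtdef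
  have hNN : Ntᴴ * Nt = 1 := by
    ext i j
    have h1 : (Ntᴴ * Nt) i j = (inner ℂ (b i) (b j) : ℂ) := by
      rw [Matrix.mul_apply, PiLp.inner_apply]
      simp only [Matrix.conjTranspose_apply, RCLike.inner_apply, hNtdef, Matrix.of_apply,
        RCLike.star_def]
      exact Finset.sum_congr rfl fun x _ => mul_comm _ _
    rw [h1, orthonormal_iff_ite.mp b.orthonormal i j, Matrix.one_apply]
  have hNN2 : Nt * Ntᴴ = 1 := mul_eq_one_comm.mp hNN
  have hcol0 : ∀ i, d i = 0 → ∀ a, (K * U) a i = 0 := by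
    intro i hdi a
    have h := hKU i i
    rw [if_pos rfl, hdi, Complex.ofReal_zero] at h
    have h2 : ∀ a : n, a ∈ Finset.univ → (starRingEnd ℂ) ((K * U) a i) * ((K * U) a i)
        = (Complex.normSq ((K * U) a i) : ℂ) := by
      intro a _
      rw [mul_comm, Complex.mul_conj]
    rw [Finset.sum_congr rfl h2] at h
    have h3 : (∑ a, Complex.normSq ((K * U) a i)) = 0 := by exact_mod_cast h
    have h4 := (Finset.sum_eq_zero_iff_of_nonneg
      (fun a _ => Complex.normSq_nonneg ((K * U) a i))).mp h3 a (Finset.mem_univ a)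
    exact Complex.normSq_eq_zero.mp h4
  have hKUe : K * U = Nt * Matrix.diagonal ((fun x : ℝ => (x : ℂ)) ∘ Real.sqrt ∘ d) := by
    ext a i
    rw [Matrix.mul_diagonal]
    by_cases hdi : d i = 0
    · rw [hcol0 i hdi a]
      simp [Function.comp, hdi]
    · have hdi' : (0:ℝ) < d i := lt_of_le_of_ne (hdnn i) (Ne.symm hdi)
      have hs : Real.sqrt (d i) ≠ 0 := ne_of_gt (Real.sqrt_pos.mpr hdi')
      have hN : Nt a i = (((Real.sqrt (d i))⁻¹ : ℝ) : ℂ) * (K * U) a i := by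
        rw [hNtdef]
        simp only [Matrix.of_apply]
        rw [hb i hdi, hwdef]
        rfl
      rw [hN]
      simp only [Function.comp_apply]
      rw [mul_comm (((Real.sqrt (d i))⁻¹ : ℝ) : ℂ), mul_assoc, ← Complex.ofReal_mul,
        inv_mul_cancel₀ hs, Complex.ofReal_one, mul_one]
  have hVconj : (Nt * star U)ᴴ = U * Ntᴴ := by
    rw [Matrix.conjTranspose_mul, Matrix.star_eq_conjTranspose, Matrix.conjTranspose_conjTranspose]
  have hsqrt : hA.sqrt = U * Matrix.diagonal ((fun x : ℝ => (x : ℂ)) ∘ Real.sqrt ∘ d) * star U :=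
    rfl
  refine ⟨Nt * star U, ?_, ?_, ?_⟩
  · calc (Nt * star U)ᴴ * (Nt * star U) = U * (Ntᴴ * Nt) * star U := by
          rw [hVconj]; noncomm_ring
    _ = 1 := by rw [hNN, mul_one, hU2]
  · calc (Nt * star U) * (Nt * star U)ᴴ = Nt * (star U * U) * Ntᴴ := by
          rw [hVconj]; noncomm_ring
    _ = 1 := by rw [hU1, mul_one, hNN2]
  · rw [hsqrt]
    calc K = K * U * star U := by rw [mul_assoc, hU2, mul_one]
      _ = Nt * Matrix.diagonal ((fun x : ℝ => (x : ℂ)) ∘ Real.sqrt ∘ d) * star U := by rw [hKUe]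
      _ = Nt * star U * (U * Matrix.diagonal ((fun x : ℝ => (x : ℂ)) ∘ Real.sqrt ∘ d) * star U) := by
          rw [show Nt * star U * (U * Matrix.diagonal ((fun x : ℝ => (x : ℂ)) ∘ Real.sqrt ∘ d) * star U)
            = Nt * (star U * U) * Matrix.diagonal ((fun x : ℝ => (x : ℂ)) ∘ Real.sqrt ∘ d) * star U from by
              noncomm_ring, hU1, mul_one]

end Basic

section TN
variable {n : Type*} {m : Type*} {N : Type*} [Fintype n] [DecidableEq n] [Fintype m]
  [DecidableEq m] [Fintype N] [DecidableEq N]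

lemma iso_cancel {P : Matrix N n ℂ} (hP : Pᴴ * P = 1) (X : Matrix n m ℂ) :
    Pᴴ * (P * X) = X := by
  rw [← Matrix.mul_assoc, hP, Matrix.one_mul]

lemma exists_unitary_trace (K : Matrix n n ℂ) :
    ∃ V : Matrix n n ℂ, Vᴴ * V = 1 ∧ V * Vᴴ = 1 ∧ (V * K).trace = (traceNorm K : ℂ) := by
  obtain ⟨V, h1, h2, hK⟩ := exists_polar K
  refine ⟨Vᴴ, by rw [Matrix.conjTranspose_conjTranspose, h2], by
    rw [Matrix.conjTranspose_conjTranspose, h1], ?_⟩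
  have hco : Vᴴ * K = (Matrix.posSemidef_conjTranspose_mul_self K).sqrt := by
    conv_lhs => rw [hK]
    exact iso_cancel h1 _
  rw [hco]
  exact trace_sqrt_eq K

lemma traceNorm_nonneg'' (K : Matrix n n ℂ) : 0 ≤ traceNorm K := by
  have h := (psd_trace_eq_re (Matrix.PosSemidef.posSemidef_sqrt
    (Matrix.posSemidef_conjTranspose_mul_self K))).2
  have h2 := trace_sqrt_eq K
  rw [h2] at h
  simpa using h

lemma abs_trace_unitary_le (K V : Matrix n n ℂ) (hV : Vᴴ * V = 1) :
    ‖(V * K).trace‖ ≤ traceNorm K := by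
  obtain ⟨V₀, hV₀1, _, hK⟩ := exists_polar K
  set S := (Matrix.posSemidef_conjTranspose_mul_self K).sqrt with hSdef
  have hStr : S.trace = (traceNorm K : ℂ) := trace_sqrt_eq K
  have hSpsd : S.PosSemidef := Matrix.PosSemidef.posSemidef_sqrt _
  set R := hSpsd.sqrt with hRdef
  have hRpsd : R.PosSemidef := Matrix.PosSemidef.posSemidef_sqrt _
  have hRR : R * R = S := hSpsd.sqrt_mul_self
  have hRH : Rᴴ = R := hRpsd.1
  have htn : 0 ≤ traceNorm K := traceNorm_nonneg'' K
  have htr : (V * K).trace = (R * (V * V₀ * R)).trace := by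
    rw [hK, ← hRR]
    rw [show V * (V₀ * (R * R)) = (V * V₀ * R) * R from by noncomm_ring]
    exact Matrix.trace_mul_comm _ _
  rw [htr]
  have e1 : (R * Rᴴ).trace.re = traceNorm K := by
    rw [hRH, hRR, hStr]
    simp
  have e2 : ((V * V₀ * R) * (V * V₀ * R)ᴴ).trace.re = traceNorm K := by
    have h3 : (V * V₀ * R) * (V * V₀ * R)ᴴ = (V * V₀) * ((R * Rᴴ) * V₀ᴴ * Vᴴ) := by
      rw [Matrix.conjTranspose_mul, Matrix.conjTranspose_mul]
      noncomm_ring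
    have h5 : (R * Rᴴ) * V₀ᴴ * Vᴴ * (V * V₀) = R * Rᴴ := by
      rw [show (R * Rᴴ) * V₀ᴴ * Vᴴ * (V * V₀) = (R * Rᴴ) * V₀ᴴ * (Vᴴ * V) * V₀ from by noncomm_ring,
        hV, mul_one, mul_assoc, hV₀1, mul_one]
    rw [h3, Matrix.trace_mul_comm, h5, e1]
  calc ‖(R * (V * V₀ * R)).trace‖
      ≤ Real.sqrt ((R * Rᴴ).trace.re) * Real.sqrt (((V * V₀ * R) * (V * V₀ * R)ᴴ).trace.re) :=
        abs_trace_mul_le R (V * V₀ * R)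
    _ = traceNorm K := by rw [e1, e2, Real.mul_self_sqrt htn]

lemma traceNorm_triangle (A B : Matrix n n ℂ) :
    traceNorm (A + B) ≤ traceNorm A + traceNorm B := by
  obtain ⟨V, h1, h2, htr⟩ := exists_unitary_trace (A + B)
  have hsplit : (V * (A + B)).trace = (V * A).trace + (V * B).trace := by
    rw [mul_add, Matrix.trace_add]
  have hre : (traceNorm (A + B) : ℝ) = ((V * A).trace + (V * B).trace).re := by
    rw [← hsplit, htr, Complex.ofReal_re]
  rw [hre, Complex.add_re]
  exact add_le_add ((Complex.re_le_norm _).trans (abs_trace_unitary_le A V h1))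
    ((Complex.re_le_norm _).trans (abs_trace_unitary_le B V h1))

lemma traceNorm_neg (A : Matrix n n ℂ) : traceNorm (-A) = traceNorm A := by
  simp only [traceNorm_eq_sqrt]
  rw [sqrt_congr (show (-A)ᴴ * (-A) = Aᴴ * A from by simp)
    (Matrix.posSemidef_conjTranspose_mul_self (-A)) (Matrix.posSemidef_conjTranspose_mul_self A)]

lemma traceNorm_psd {A : Matrix n n ℂ} (hA : A.PosSemidef) : traceNorm A = A.trace.re := by
  simp only [traceNorm_eq_sqrt]
  rw [sqrt_congr (show Aᴴ * A = A ^ 2 from by rw [hA.1.eq, pow_two])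
    (Matrix.posSemidef_conjTranspose_mul_self A) (hA.pow 2), hA.sqrt_sq]

/-- trace norm is invariant under isometric embeddings. -/
lemma traceNorm_iso (P Q : Matrix N n ℂ) (hP : Pᴴ * P = 1) (hQ : Qᴴ * Q = 1) (M : Matrix n n ℂ) :
    traceNorm (P * M * Qᴴ) = traceNorm M := by
  have hXX : (P * M * Qᴴ)ᴴ * (P * M * Qᴴ) = Q * (Mᴴ * (M * Qᴴ)) := by
    rw [Matrix.conjTranspose_mul, Matrix.conjTranspose_mul, Matrix.conjTranspose_conjTranspose]
    simp only [Matrix.mul_assoc]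
    rw [iso_cancel hP]
  have hS := Matrix.PosSemidef.posSemidef_sqrt (Matrix.posSemidef_conjTranspose_mul_self M)
  set S := (Matrix.posSemidef_conjTranspose_mul_self M).sqrt with hSdef
  have hStr : S.trace = (traceNorm M : ℂ) := trace_sqrt_eq M
  have hSS : S * S = Mᴴ * M := Matrix.PosSemidef.sqrt_mul_self _
  have hcand : (Q * S * Qᴴ).PosSemidef := hS.mul_mul_conjTranspose_same Q
  have hsq : (Q * S * Qᴴ) ^ 2 = (P * M * Qᴴ)ᴴ * (P * M * Qᴴ) := by
    rw [pow_two, hXX]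
    simp only [Matrix.mul_assoc]
    rw [iso_cancel hQ, ← Matrix.mul_assoc S S, hSS]
    simp only [Matrix.mul_assoc]
  have hsqrt_eq : Q * S * Qᴴ = (Matrix.posSemidef_conjTranspose_mul_self (P * M * Qᴴ)).sqrt :=
    hcand.eq_sqrt_of_sq_eq _ hsq
  simp only [traceNorm_eq_sqrt]
  rw [← hsqrt_eq, Matrix.trace_mul_comm (Q * S) Qᴴ, iso_cancel hQ]


end TN

section Pure
variable {m : Type*} [Fintype m] [DecidableEq m]

lemma vmv_mul_vmv (a b c d : m → ℂ) :
    Matrix.vecMulVec a b * Matrix.vecMulVec c d = (b ⬝ᵥ c) • Matrix.vecMulVec a d := by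
  ext i j
  simp only [Matrix.mul_apply, Matrix.vecMulVec_apply, Matrix.smul_apply, dotProduct,
    smul_eq_mul, Finset.sum_mul]
  refine Finset.sum_congr rfl fun k _ => ?_
  ring

lemma vmv_herm (z : m → ℂ) : (Matrix.vecMulVec z (star z))ᴴ = Matrix.vecMulVec z (star z) := by
  ext i j
  simp only [Matrix.conjTranspose_apply, Matrix.vecMulVec_apply, Pi.star_apply, star_mul',
    star_star]
  ring

lemma vmv_trace (a b : m → ℂ) : (Matrix.vecMulVec a b).trace = b ⬝ᵥ a := by
  simp [Matrix.trace, Matrix.diag, Matrix.vecMulVec_apply, dotProduct, mul_comm]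

lemma star_dot_comm (x y : m → ℂ) : star y ⬝ᵥ x = (starRingEnd ℂ) (star x ⬝ᵥ y) := by
  simp only [dotProduct, Pi.star_apply, map_sum, _root_.map_mul, RCLike.star_def,
    Complex.conj_conj]
  exact Finset.sum_congr rfl fun k _ => by ring

/-- Key pure-state inequality. -/
lemma pure_bound (x y : m → ℂ) (V : Matrix m m ℂ)
    (hx : star x ⬝ᵥ x = 1) (hy : star y ⬝ᵥ y = 1) (hV : Vᴴ * V = 1) :
    ‖(V * (Matrix.vecMulVec x (star x) - Matrix.vecMulVec y (star y))).trace‖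
      ≤ 2 * Real.sqrt (1 - Complex.normSq (star x ⬝ᵥ y)) := by
  classical
  set β : ℂ := star x ⬝ᵥ y with hβ
  set X := Matrix.vecMulVec x (star x) with hX
  set Y := Matrix.vecMulVec y (star y) with hY
  set H := X - Y with hH
  have hHherm : Hᴴ = H := by rw [hH, Matrix.conjTranspose_sub, hX, hY, vmv_herm, vmv_herm]
  have hyx : star y ⬝ᵥ x = (starRingEnd ℂ) β := star_dot_comm x y
  have hH2 : H * H = X + Y - β • Matrix.vecMulVec x (star y)
      - (starRingEnd ℂ) β • Matrix.vecMulVec y (star x) := by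
    rw [hH, sub_mul, mul_sub, mul_sub, hX, hY]
    rw [vmv_mul_vmv, vmv_mul_vmv, vmv_mul_vmv, vmv_mul_vmv, hx, hy, hyx, ← hβ, one_smul, one_smul]
    abel
  have hc : (β * (starRingEnd ℂ) β : ℂ) = (Complex.normSq β : ℂ) := Complex.mul_conj β
  have hH3 : H * (H * H) = ((1 : ℂ) - (Complex.normSq β : ℂ)) • H := by
    rw [hH2, hH, hX, hY]
    simp only [mul_sub, mul_add, sub_mul, add_mul, Matrix.mul_smul, vmv_mul_vmv, hx, hy, hyx, ← hβ,
      one_smul]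
    rw [← hc]
    match_scalars <;> ring
  -- trace of H*H
  have htrH2 : (H * H).trace = ((2 : ℝ) * (1 - Complex.normSq β) : ℝ) := by
    rw [hH2]
    rw [Matrix.trace_sub, Matrix.trace_sub, Matrix.trace_add, Matrix.trace_smul,
      Matrix.trace_smul, hX, hY, vmv_trace, vmv_trace, vmv_trace, vmv_trace, hx, hy, hyx, ← hβ]
    rw [smul_eq_mul, smul_eq_mul]
    push_cast
    rw [← hc]
    ring
  -- normSq β ≤ 1 by Cauchy–Schwarz
  have hble : Complex.normSq β ≤ 1 := by
    set A : Matrix Unit m ℂ := Matrix.of (fun _ k => (star x) k) with hAdef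
    set B : Matrix m Unit ℂ := Matrix.of (fun k _ => y k) with hBdef
    have h1 : (A * B).trace = β := by
      rw [hβ]
      simp [Matrix.trace, Matrix.diag, Matrix.mul_apply, dotProduct, hAdef, hBdef]
    have h2 : (A * Aᴴ).trace.re = 1 := by
      have : (A * Aᴴ).trace = star x ⬝ᵥ x := by
        simp only [Matrix.trace, Matrix.diag, Matrix.mul_apply, Matrix.conjTranspose_apply,
          dotProduct, hAdef, Matrix.of_apply, Pi.star_apply, RCLike.star_def,
          Complex.conj_conj, Finset.univ_unique, Finset.sum_singleton]
      rw [this, hx]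
      simp
    have h3 : (B * Bᴴ).trace.re = 1 := by
      have : (B * Bᴴ).trace = star y ⬝ᵥ y := by
        simp only [Matrix.trace, Matrix.diag, Matrix.mul_apply, Matrix.conjTranspose_apply,
          dotProduct, hBdef, Matrix.of_apply, Pi.star_apply, RCLike.star_def,
          Finset.univ_unique, Finset.sum_singleton]
        refine Finset.sum_congr rfl fun k _ => by ring
      rw [this, hy]
      simp
    have hcs := abs_trace_mul_le A B
    rw [h1, h2, h3, Real.sqrt_one, mul_one] at hcs
    calc Complex.normSq β = ‖β‖ ^ 2 := (Complex.sq_norm β).symm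
      _ ≤ 1 ^ 2 := by
          apply pow_le_pow_left₀ (norm_nonneg β) hcs
      _ = 1 := one_pow 2
  set c : ℝ := 1 - Complex.normSq β with hcdef
  have hc0 : 0 ≤ c := by rw [hcdef]; linarith [hble]
  have hcc : ((1 : ℂ) - (Complex.normSq β : ℂ)) = (c : ℂ) := by push_cast [hcdef]; ring
  by_cases hcz : c = 0
  · -- H = 0
    have hfr : (H * Hᴴ).trace.re = 0 := by
      rw [hHherm, htrH2, hcz]
      simp
    have hzero : ∀ i j, H i j = 0 := by
      intro i j
      have hsum := trace_mul_conjTranspose_self_re H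
      rw [hfr] at hsum
      have := (Finset.sum_eq_zero_iff_of_nonneg (fun i _ => Finset.sum_nonneg
        (fun j _ => Complex.normSq_nonneg (H i j)))).mp hsum.symm i (Finset.mem_univ i)
      have := (Finset.sum_eq_zero_iff_of_nonneg
        (fun j _ => Complex.normSq_nonneg (H i j))).mp this j (Finset.mem_univ j)
      exact Complex.normSq_eq_zero.mp this
    have hHz : H = 0 := by ext i j; exact hzero i j
    rw [hHz, mul_zero, Matrix.trace_zero, norm_zero]
    positivity
  · have hcpos : 0 < c := lt_of_le_of_ne hc0 (Ne.symm hcz)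
    set P : Matrix m m ℂ := ((c : ℂ))⁻¹ • (H * H) with hPdef
    have hHP : H * P = H := by
      rw [hPdef, Matrix.mul_smul, hH3, hcc, smul_smul, inv_mul_cancel₀ (by
        exact_mod_cast hcz), one_smul]
    have htr : (V * H).trace = ((V * H) * P).trace := by
      rw [Matrix.mul_assoc, hHP]
    have hcne : ((c : ℝ) : ℂ) ≠ 0 := by exact_mod_cast hcz
    have hVHH : (V * H) * (V * H)ᴴ = V * ((H * H) * Vᴴ) := by
      rw [Matrix.conjTranspose_mul, hHherm]
      noncomm_ring
    have e1 : ((V * H) * (V * H)ᴴ).trace.re = 2 * c := by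
      rw [hVHH, Matrix.trace_mul_comm, Matrix.mul_assoc (H * H) Vᴴ V, hV, Matrix.mul_one, htrH2]
      simp
    have hPH : Pᴴ = P := by
      rw [hPdef, Matrix.conjTranspose_smul, Matrix.conjTranspose_mul, hHherm]
      congr 1
      rw [star_inv₀, RCLike.star_def, Complex.conj_ofReal]
    have hH4 : (H * H) * (H * H) = ((c : ℂ)) • (H * H) := by
      rw [Matrix.mul_assoc H H (H * H), hH3, hcc, Matrix.mul_smul]
    have e2 : (P * Pᴴ).trace.re = 2 := by
      have hPP : P * Pᴴ = (((c : ℂ))⁻¹ * ((c : ℂ))⁻¹ * (c : ℂ)) • (H * H) := by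
        rw [hPH, hPdef, Matrix.smul_mul, Matrix.mul_smul, hH4, smul_smul, smul_smul]
      rw [hPP, Matrix.trace_smul, htrH2, smul_eq_mul]
      rw [show ((c : ℂ))⁻¹ * ((c : ℂ))⁻¹ * (c : ℂ) * (((2 * c : ℝ)) : ℂ) = ((2 : ℝ) : ℂ) from by
        push_cast
        field_simp]
      simp
    rw [htr]
    calc ‖((V * H) * P).trace‖
        ≤ Real.sqrt (((V * H) * (V * H)ᴴ).trace.re) * Real.sqrt ((P * Pᴴ).trace.re) :=
          abs_trace_mul_le _ _
      _ = Real.sqrt (2 * c) * Real.sqrt 2 := by rw [e1, e2]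
      _ = 2 * Real.sqrt c := by
          rw [← Real.sqrt_mul (by positivity)]
          rw [show (2 * c * 2 : ℝ) = 2 ^ 2 * c from by ring]
          rw [Real.sqrt_mul (by positivity), Real.sqrt_sq (by norm_num)]


end Pure

section Core
variable {r s : Type*} [Fintype r] [DecidableEq r] [Fintype s] [DecidableEq s]

lemma kron_conjTranspose (A : Matrix r r ℂ) (B : Matrix s s ℂ) :
    (A ⊗ₖ B)ᴴ = Aᴴ ⊗ₖ Bᴴ := by
  ext p q
  simp only [Matrix.conjTranspose_apply, Matrix.kroneckerMap_apply, star_mul']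

lemma lift_trace (B : Matrix s s ℂ) (z : (r × s) → ℂ) (G : Matrix s s ℂ)
    (hG : ∀ v w, G w v = ∑ u, z (u, w) * (starRingEnd ℂ) (z (u, v))) :
    (((1 : Matrix r r ℂ) ⊗ₖ B) * Matrix.vecMulVec z (star z)).trace = (B * G).trace := by
  have lhs : (((1 : Matrix r r ℂ) ⊗ₖ B) * Matrix.vecMulVec z (star z)).trace
      = ∑ u : r, ∑ v : s, ∑ w : s, B v w * (z (u, w) * (starRingEnd ℂ) (z (u, v))) := by
    simp only [Matrix.trace, Matrix.diag, Matrix.mul_apply, Matrix.vecMulVec_apply,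
      Pi.star_apply, Matrix.kroneckerMap_apply, RCLike.star_def]
    rw [Fintype.sum_prod_type]
    refine Finset.sum_congr rfl fun u _ => ?_
    refine Finset.sum_congr rfl fun v _ => ?_
    rw [Fintype.sum_prod_type]
    rw [Finset.sum_eq_single u]
    · refine Finset.sum_congr rfl fun w _ => ?_
      rw [Matrix.one_apply_eq, one_mul]
    · intro b _ hb
      apply Finset.sum_eq_zero
      intro w _
      rw [Matrix.one_apply_ne (Ne.symm hb)]
      ring
    · intro h
      exact absurd (Finset.mem_univ u) h
  have rhs : (B * G).trace = ∑ v, ∑ w, B v w * G w v := by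
    simp [Matrix.trace, Matrix.diag, Matrix.mul_apply]
  rw [lhs, rhs, Finset.sum_comm]
  refine Finset.sum_congr rfl fun v _ => ?_
  rw [Finset.sum_comm]
  refine Finset.sum_congr rfl fun w _ => ?_
  rw [hG, Finset.mul_sum]

/-- Core bound: any unitary overlap with the cross matrix K is at most √ε. -/
lemma core_bound (ε : ℝ) (ρ : Fin 2 → Matrix s s ℂ) (ψ : Fin 2 → (r × s) → ℂ)
    (hρ : ∀ i, IsDensity (ρ i))
    (hpur : ∀ i v w, ρ i v w = ∑ u : r, ψ i (u, v) * (starRingEnd ℂ) (ψ i (u, w)))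
    (hdist : 2 - ε ≤ traceNorm (ρ 0 - ρ 1)) (hε1 : ε < 1)
    (W : Matrix r r ℂ) (hW : Wᴴ * W = 1) :
    ‖(W * Matrix.of (fun u' u : r =>
      ∑ v : s, ψ 1 (u', v) * (starRingEnd ℂ) (ψ 0 (u, v)))).trace‖ ≤ Real.sqrt ε := by
  classical
  set K : Matrix r r ℂ :=
    Matrix.of (fun u' u : r => ∑ v : s, ψ 1 (u', v) * (starRingEnd ℂ) (ψ 0 (u, v))) with hKdef
  set x : (r × s) → ℂ := ψ 0 with hxdef
  set y : (r × s) → ℂ := fun p => ∑ a, W p.1 a * ψ 1 (a, p.2) with hydef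
  -- unit norms
  have hunit : ∀ i : Fin 2, star (ψ i) ⬝ᵥ (ψ i) = 1 := by
    intro i
    have : star (ψ i) ⬝ᵥ (ψ i) = ∑ v, ρ i v v := by
      rw [dotProduct, Fintype.sum_prod_type, Finset.sum_comm]
      refine Finset.sum_congr rfl fun v _ => ?_
      rw [hpur i v v]
      refine Finset.sum_congr rfl fun u _ => ?_
      simp only [Pi.star_apply, RCLike.star_def]
      ring
    rw [this, show (∑ v, ρ i v v) = (ρ i).trace from rfl, (hρ i).2]
  have hWcol : ∀ a b : r, (∑ u, (starRingEnd ℂ) (W u b) * W u a) = if b = a then 1 else 0 := by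
    intro a b
    have h1 : (Wᴴ * W) b a = ∑ u, (starRingEnd ℂ) (W u b) * W u a := by
      simp [Matrix.mul_apply, Matrix.conjTranspose_apply, RCLike.star_def]
    rw [← h1, hW, Matrix.one_apply]
  have hy_g : ∀ v w, ρ 1 w v = ∑ u, y (u, w) * (starRingEnd ℂ) (y (u, v)) := by
    intro v w
    have e1 : ∀ u : r, y (u, w) * (starRingEnd ℂ) (y (u, v))
        = ∑ a, ∑ b, (starRingEnd ℂ) (W u b) * W u a *
            (ψ 1 (a, w) * (starRingEnd ℂ) (ψ 1 (b, v))) := by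
      intro u
      simp only [hydef]
      rw [map_sum, Finset.sum_mul_sum]
      refine Finset.sum_congr rfl fun a _ => Finset.sum_congr rfl fun b _ => ?_
      rw [_root_.map_mul]
      ring
    calc ρ 1 w v = ∑ a, ψ 1 (a, w) * (starRingEnd ℂ) (ψ 1 (a, v)) := hpur 1 w v
      _ = ∑ a, ∑ b, (if b = a then (1:ℂ) else 0) * (ψ 1 (a, w) * (starRingEnd ℂ) (ψ 1 (b, v))) := by
          refine Finset.sum_congr rfl fun a _ => ?_
          symm
          rw [Finset.sum_eq_single a (fun b _ hb => by rw [if_neg hb, zero_mul])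
            (fun h => absurd (Finset.mem_univ a) h), if_pos rfl, one_mul]
      _ = ∑ a, ∑ b, (∑ u, (starRingEnd ℂ) (W u b) * W u a) *
            (ψ 1 (a, w) * (starRingEnd ℂ) (ψ 1 (b, v))) := by
          refine Finset.sum_congr rfl fun a _ => Finset.sum_congr rfl fun b _ => ?_
          rw [hWcol]
      _ = ∑ a, ∑ b, ∑ u, (starRingEnd ℂ) (W u b) * W u a *
            (ψ 1 (a, w) * (starRingEnd ℂ) (ψ 1 (b, v))) := by
          refine Finset.sum_congr rfl fun a _ =>
            Finset.sum_congr rfl fun b _ => Finset.sum_mul _ _ _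
      _ = ∑ a, ∑ u, ∑ b, (starRingEnd ℂ) (W u b) * W u a *
            (ψ 1 (a, w) * (starRingEnd ℂ) (ψ 1 (b, v))) :=
          Finset.sum_congr rfl fun a _ => Finset.sum_comm
      _ = ∑ u, ∑ a, ∑ b, (starRingEnd ℂ) (W u b) * W u a *
            (ψ 1 (a, w) * (starRingEnd ℂ) (ψ 1 (b, v))) := Finset.sum_comm
      _ = ∑ u, y (u, w) * (starRingEnd ℂ) (y (u, v)) :=
          Finset.sum_congr rfl fun u _ => (e1 u).symm
  have hyunit : star y ⬝ᵥ y = 1 := by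
    have : star y ⬝ᵥ y = ∑ v, ρ 1 v v := by
      rw [dotProduct, Fintype.sum_prod_type, Finset.sum_comm]
      refine Finset.sum_congr rfl fun v _ => ?_
      rw [hy_g v v]
      refine Finset.sum_congr rfl fun u _ => ?_
      simp only [Pi.star_apply, RCLike.star_def]
      ring
    rw [this, show (∑ v, ρ 1 v v) = (ρ 1).trace from rfl, (hρ 1).2]
  -- identify β with trace(W K)
  have hβ : star x ⬝ᵥ y = (W * K).trace := by
    have h1 : (W * K).trace = ∑ u, ∑ a, W u a * K a u := by
      simp [Matrix.trace, Matrix.diag, Matrix.mul_apply]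
    rw [h1, dotProduct, Fintype.sum_prod_type]
    refine Finset.sum_congr rfl fun u _ => ?_
    calc ∑ v, star x (u, v) * y (u, v)
        = ∑ v, ∑ a, W u a * (ψ 1 (a, v) * (starRingEnd ℂ) (ψ 0 (u, v))) := by
          refine Finset.sum_congr rfl fun v _ => ?_
          simp only [hydef, hxdef, Pi.star_apply, RCLike.star_def]
          rw [Finset.mul_sum]
          refine Finset.sum_congr rfl fun a _ => by ring
      _ = ∑ a, W u a * K a u := by
          rw [Finset.sum_comm]
          refine Finset.sum_congr rfl fun a _ => ?_
          rw [hKdef]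
          simp only [Matrix.of_apply]
          rw [Finset.mul_sum]
  -- discrimination chain
  obtain ⟨B, hB1, hB2, hBtr⟩ := exists_unitary_trace (ρ 0 - ρ 1)
  set Bt : Matrix (r × s) (r × s) ℂ := (1 : Matrix r r ℂ) ⊗ₖ B with hBtdef
  have hBt1 : Btᴴ * Bt = 1 := by
    rw [hBtdef, kron_conjTranspose, Matrix.conjTranspose_one, ← Matrix.mul_kronecker_mul,
      Matrix.one_mul, hB1, Matrix.one_kronecker_one]
  have hx_g : ∀ v w, ρ 0 w v = ∑ u, x (u, w) * (starRingEnd ℂ) (x (u, v)) := fun v w => hpur 0 w v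
  have e1 : (B * (ρ 0 - ρ 1)).trace
      = (Bt * (Matrix.vecMulVec x (star x) - Matrix.vecMulVec y (star y))).trace := by
    rw [mul_sub, Matrix.trace_sub, mul_sub, Matrix.trace_sub, hBtdef,
      lift_trace B x (ρ 0) hx_g, lift_trace B y (ρ 1) hy_g]
  have chain : 2 - ε ≤ 2 * Real.sqrt (1 - Complex.normSq (star x ⬝ᵥ y)) := by
    calc 2 - ε ≤ traceNorm (ρ 0 - ρ 1) := hdist
      _ = ((B * (ρ 0 - ρ 1)).trace).re := by rw [hBtr, Complex.ofReal_re]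
      _ = ((Bt * (Matrix.vecMulVec x (star x) - Matrix.vecMulVec y (star y))).trace).re := by
          rw [e1]
      _ ≤ ‖(Bt * (Matrix.vecMulVec x (star x) -
            Matrix.vecMulVec y (star y))).trace‖ := Complex.re_le_norm _
      _ ≤ 2 * Real.sqrt (1 - Complex.normSq (star x ⬝ᵥ y)) :=
          pure_bound x y Bt (hunit 0) hyunit hBt1
  have hns1 : Complex.normSq (star x ⬝ᵥ y) ≤ 1 := by
    by_contra hcon
    push_neg at hcon
    have h0 : Real.sqrt (1 - Complex.normSq (star x ⬝ᵥ y)) = 0 :=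
      Real.sqrt_eq_zero'.mpr (by linarith)
    rw [h0] at chain
    linarith
  have hsq := Real.sq_sqrt (show (0:ℝ) ≤ 1 - Complex.normSq (star x ⬝ᵥ y) by linarith)
  have ht : 1 - ε/2 ≤ Real.sqrt (1 - Complex.normSq (star x ⬝ᵥ y)) := by linarith
  have htsq : (1 - ε/2)^2 ≤ 1 - Complex.normSq (star x ⬝ᵥ y) := by
    nlinarith [Real.sqrt_nonneg (1 - Complex.normSq (star x ⬝ᵥ y))]
  have hns : Complex.normSq (star x ⬝ᵥ y) ≤ ε := by nlinarith [sq_nonneg ε]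
  rw [← hβ, Complex.norm_def]
  exact Real.sqrt_le_sqrt hns


variable {r s : Type*} [Fintype r] [DecidableEq r] [Fintype s] [DecidableEq s]

/-- The separable (dephased) state. -/
noncomputable def sigmaMat (ψ : Fin 2 → (r × s) → ℂ) :
    Matrix (Fin 2 × (Fin 2 × r)) (Fin 2 × (Fin 2 × r)) ℂ :=
  Matrix.of fun p q =>
    if p.1 = q.1 ∧ p.1 = p.2.1 ∧ q.1 = q.2.1 then
      (2 : ℂ)⁻¹ * ∑ v, ψ p.1 (p.2.2, v) * (starRingEnd ℂ) (ψ q.1 (q.2.2, v))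
    else 0

lemma bell_coeff : (((Real.sqrt 2 : ℝ) : ℂ))⁻¹ * (starRingEnd ℂ) ((((Real.sqrt 2 : ℝ) : ℂ))⁻¹)
    = (2 : ℂ)⁻¹ := by
  rw [map_inv₀, Complex.conj_ofReal, ← mul_inv, ← Complex.ofReal_mul,
    Real.mul_self_sqrt (by norm_num)]
  norm_num

lemma omega_apply (ψ : Fin 2 → (r × s) → ℂ) (p q : Fin 2 × (Fin 2 × r)) :
    bellOmega ψ p q = (if p.1 = p.2.1 ∧ q.1 = q.2.1 then
      (2 : ℂ)⁻¹ * ∑ v, ψ p.1 (p.2.2, v) * (starRingEnd ℂ) (ψ q.1 (q.2.2, v)) else 0) := by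
  unfold bellOmega bellPhi
  show (∑ v : s, (if p.1 = p.2.1 then ((Real.sqrt 2 : ℝ) : ℂ)⁻¹ * ψ p.1 (p.2.2, v) else 0) *
      (starRingEnd ℂ) ((if q.1 = q.2.1 then ((Real.sqrt 2 : ℝ) : ℂ)⁻¹ * ψ q.1 (q.2.2, v) else 0)))
      = _
  by_cases h1 : p.1 = p.2.1
  · by_cases h2 : q.1 = q.2.1
    · rw [if_pos (And.intro h1 h2), Finset.mul_sum]
      refine Finset.sum_congr rfl fun v _ => ?_
      rw [if_pos h1, if_pos h2, _root_.map_mul]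
      calc ((Real.sqrt 2 : ℝ) : ℂ)⁻¹ * ψ p.1 (p.2.2, v) *
            ((starRingEnd ℂ) ((((Real.sqrt 2 : ℝ) : ℂ))⁻¹) * (starRingEnd ℂ) (ψ q.1 (q.2.2, v)))
          = ((((Real.sqrt 2 : ℝ) : ℂ))⁻¹ * (starRingEnd ℂ) ((((Real.sqrt 2 : ℝ) : ℂ))⁻¹)) *
            (ψ p.1 (p.2.2, v) * (starRingEnd ℂ) (ψ q.1 (q.2.2, v))) := by ring
        _ = (2 : ℂ)⁻¹ * (ψ p.1 (p.2.2, v) * (starRingEnd ℂ) (ψ q.1 (q.2.2, v))) := by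
            rw [bell_coeff]
    · rw [if_neg (fun h => h2 h.2)]
      apply Finset.sum_eq_zero
      intro v _
      rw [if_neg h2, map_zero, mul_zero]
  · rw [if_neg (fun h => h1 h.1)]
    apply Finset.sum_eq_zero
    intro v _
    rw [if_neg h1, zero_mul]

lemma sum_diag (ρ : Fin 2 → Matrix s s ℂ) (ψ : Fin 2 → (r × s) → ℂ)
    (hρ : ∀ i, IsDensity (ρ i))
    (hpur : ∀ i v w, ρ i v w = ∑ u : r, ψ i (u, v) * (starRingEnd ℂ) (ψ i (u, w)))
    (i : Fin 2) : ∑ u : r, ∑ v : s, ψ i (u, v) * (starRingEnd ℂ) (ψ i (u, v)) = 1 := by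
  rw [Finset.sum_comm]
  rw [Finset.sum_congr rfl (fun v (_ : v ∈ Finset.univ) => (hpur i v v).symm),
    show (∑ v, ρ i v v) = (ρ i).trace from rfl, (hρ i).2]

/-- embedding isometry picking out the `(a,(a,·))` block -/
noncomputable def emb (a : Fin 2) : Matrix (Fin 2 × (Fin 2 × r)) r ℂ :=
  Matrix.of fun p u => if p.1 = a ∧ p.2.1 = a ∧ p.2.2 = u then 1 else 0

lemma emb_isometry (a : Fin 2) : (emb (r := r) a)ᴴ * emb (r := r) a = 1 := by
  ext u u'
  simp only [Matrix.mul_apply, Matrix.conjTranspose_apply, emb, Matrix.of_apply]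
  rw [Finset.sum_eq_single ((a, (a, u)) : Fin 2 × (Fin 2 × r))]
  · simp only [and_true, if_pos (And.intro rfl (And.intro rfl rfl))]
    simp [Matrix.one_apply, eq_comm]
  · rintro ⟨c, b, w⟩ _ hne
    by_cases hcu : c = a ∧ b = a ∧ w = u
    · exfalso
      apply hne
      obtain ⟨h1, h2, h3⟩ := hcu
      subst h1; subst h2; subst h3
      rfl
    · rw [if_neg (by exact_mod_cast hcu), star_zero, zero_mul]
  · intro h
    exact absurd (Finset.mem_univ _) h

lemma emb_mul_apply (a : Fin 2) (M : Matrix r r ℂ) (p : Fin 2 × (Fin 2 × r)) (u' : r) :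
    (emb (r := r) a * M) p u' = if p.1 = a ∧ p.2.1 = a then M p.2.2 u' else 0 := by
  rw [Matrix.mul_apply]
  by_cases hp : p.1 = a ∧ p.2.1 = a
  · rw [if_pos hp]
    rw [Finset.sum_eq_single p.2.2]
    · rw [show (emb (r := r) a) p p.2.2 = 1 from by
        simp [emb, hp.1, hp.2], one_mul]
    · intro b _ hb
      rw [show (emb (r := r) a) p b = 0 from by
        simp only [emb, Matrix.of_apply]
        rw [if_neg (fun h => hb h.2.2.symm)]
        , zero_mul]
    · intro h
      exact absurd (Finset.mem_univ _) h
  · rw [if_neg hp]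
    apply Finset.sum_eq_zero
    intro b _
    rw [show (emb (r := r) a) p b = 0 from by
      simp only [emb, Matrix.of_apply]
      rw [if_neg (fun h => hp (And.intro h.1 h.2.1))], zero_mul]

lemma mul_embH_apply (a' : Fin 2) (X : Matrix (Fin 2 × (Fin 2 × r)) r ℂ)
    (p q : Fin 2 × (Fin 2 × r)) :
    (X * (emb (r := r) a')ᴴ) p q = if q.1 = a' ∧ q.2.1 = a' then X p q.2.2 else 0 := by
  rw [Matrix.mul_apply]
  by_cases hq : q.1 = a' ∧ q.2.1 = a'
  · rw [if_pos hq]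
    rw [Finset.sum_eq_single q.2.2]
    · rw [Matrix.conjTranspose_apply, show (emb (r := r) a') q q.2.2 = 1 from by
        simp [emb, hq.1, hq.2], star_one, mul_one]
    · intro b _ hb
      rw [Matrix.conjTranspose_apply, show (emb (r := r) a') q b = 0 from by
        simp only [emb, Matrix.of_apply]
        rw [if_neg (fun h => hb h.2.2.symm)], star_zero, mul_zero]
    · intro h
      exact absurd (Finset.mem_univ _) h
  · rw [if_neg hq]
    apply Finset.sum_eq_zero
    intro b _
    rw [Matrix.conjTranspose_apply, show (emb (r := r) a') q b = 0 from by
      simp only [emb, Matrix.of_apply]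
      rw [if_neg (fun h => hq (And.intro h.1 h.2.1))], star_zero, mul_zero]

lemma sandwich_apply (a a' : Fin 2) (M : Matrix r r ℂ) (p q : Fin 2 × (Fin 2 × r)) :
    (emb (r := r) a * M * (emb (r := r) a')ᴴ) p q
      = if p.1 = a ∧ p.2.1 = a ∧ q.1 = a' ∧ q.2.1 = a' then M p.2.2 q.2.2 else 0 := by
  rw [mul_embH_apply, emb_mul_apply]
  by_cases h1 : p.1 = a ∧ p.2.1 = a
  · by_cases h2 : q.1 = a' ∧ q.2.1 = a'
    · rw [if_pos h2, if_pos h1, if_pos ⟨h1.1, h1.2, h2.1, h2.2⟩]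
    · rw [if_neg h2, if_neg (fun h => h2 ⟨h.2.2.1, h.2.2.2⟩)]
  · by_cases h2 : q.1 = a' ∧ q.2.1 = a'
    · rw [if_pos h2, if_neg h1, if_neg (fun h => h1 ⟨h.1, h.2.1⟩)]
    · rw [if_neg h2, if_neg (fun h => h2 ⟨h.2.2.1, h.2.2.2⟩)]

lemma psd_vmv {m : Type*} [Fintype m] [DecidableEq m] (z : m → ℂ) :
    (Matrix.vecMulVec z (star z)).PosSemidef :=
  Matrix.posSemidef_vecMulVec_self_star z

lemma half_psd {m : Type*} [Fintype m] [DecidableEq m] {A : Matrix m m ℂ} (hA : A.PosSemidef) :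
    (((2 : ℂ))⁻¹ • A).PosSemidef :=
  hA.smul (by rw [Complex.le_def]; norm_num)

/-- A-side basis state matrix -/
noncomputable def eA (i : Fin 2) : Matrix (Fin 2) (Fin 2) ℂ :=
  Matrix.of fun a b => if a = i ∧ b = i then 1 else 0

/-- B-side conditional state -/
noncomputable def tauMat (ψ : Fin 2 → (r × s) → ℂ) (i : Fin 2) :
    Matrix (Fin 2 × r) (Fin 2 × r) ℂ :=
  Matrix.of fun x y => if x.1 = i ∧ y.1 = i then
    ∑ v, ψ i (x.2, v) * (starRingEnd ℂ) (ψ i (y.2, v)) else 0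

lemma eA_density (i : Fin 2) : IsDensity (eA i) := by
  constructor
  · have : eA i = Matrix.vecMulVec (fun a => if a = i then 1 else 0)
        (star (fun a : Fin 2 => if a = i then (1:ℂ) else 0)) := by
      ext a b
      simp only [eA, Matrix.of_apply, Matrix.vecMulVec_apply, Pi.star_apply]
      by_cases h1 : a = i <;> by_cases h2 : b = i <;> simp [h1, h2]
    rw [this]
    exact psd_vmv _
  · simp only [Matrix.trace, Matrix.diag, eA, Matrix.of_apply, and_self]
    rw [Finset.sum_eq_single i (fun b _ hb => by rw [if_neg hb]) (fun h => absurd (Finset.mem_univ _) h),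
      if_pos rfl]

lemma tau_density (ρ : Fin 2 → Matrix s s ℂ) (ψ : Fin 2 → (r × s) → ℂ)
    (hρ : ∀ i, IsDensity (ρ i))
    (hpur : ∀ i v w, ρ i v w = ∑ u : r, ψ i (u, v) * (starRingEnd ℂ) (ψ i (u, w)))
    (i : Fin 2) : IsDensity (tauMat ψ i) := by
  constructor
  · have : tauMat ψ i = (Matrix.of fun (x : Fin 2 × r) (v : s) =>
        if x.1 = i then ψ i (x.2, v) else 0) *
        (Matrix.of fun (x : Fin 2 × r) (v : s) => if x.1 = i then ψ i (x.2, v) else 0)ᴴ := by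
      ext x y
      simp only [tauMat, Matrix.of_apply, Matrix.mul_apply, Matrix.conjTranspose_apply,
        RCLike.star_def]
      by_cases h1 : x.1 = i
      · by_cases h2 : y.1 = i
        · rw [if_pos ⟨h1, h2⟩]
          refine Finset.sum_congr rfl fun v _ => by rw [if_pos h1, if_pos h2]
        · rw [if_neg (fun h => h2 h.2)]
          symm
          apply Finset.sum_eq_zero
          intro v _
          rw [if_neg h2, map_zero, mul_zero]
      · rw [if_neg (fun h => h1 h.1)]
        symm
        apply Finset.sum_eq_zero
        intro v _
        rw [if_neg h1, zero_mul]
    rw [this]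
    exact Matrix.posSemidef_self_mul_conjTranspose _
  · have : (tauMat (r := r) (s := s) ψ i).trace
        = ∑ b : Fin 2, ∑ u : r, (if b = i then ∑ v, ψ i (u, v) * (starRingEnd ℂ) (ψ i (u, v)) else 0) := by
      rw [Matrix.trace, Fintype.sum_prod_type]
      refine Finset.sum_congr rfl fun b _ => Finset.sum_congr rfl fun u _ => ?_
      simp only [Matrix.diag, tauMat, Matrix.of_apply, and_self]
    rw [this, Finset.sum_eq_single i ?hz ?hm]
    · rw [Finset.sum_congr rfl (fun u (_ : u ∈ Finset.univ) => if_pos rfl)]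
      exact sum_diag ρ ψ hρ hpur i
    case hz =>
      intro b _ hb
      apply Finset.sum_eq_zero
      intro u _
      rw [if_neg hb]
    case hm =>
      intro h
      exact absurd (Finset.mem_univ _) h

lemma sigma_separable (ρ : Fin 2 → Matrix s s ℂ) (ψ : Fin 2 → (r × s) → ℂ)
    (hρ : ∀ i, IsDensity (ρ i))
    (hpur : ∀ i v w, ρ i v w = ∑ u : r, ψ i (u, v) * (starRingEnd ℂ) (ψ i (u, w))) :
    SeparableState (sigmaMat ψ) := by
  refine ⟨2, fun _ => 1/2, fun i => eA i, fun i => tauMat ψ i, fun i => by norm_num,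
    by rw [Fin.sum_univ_two]; norm_num, fun i => eA_density i,
    fun i => tau_density ρ ψ hρ hpur i, ?_⟩
  ext p q
  obtain ⟨a, b, u⟩ := p
  obtain ⟨a', b', u'⟩ := q
  rw [Fin.sum_univ_two]
  simp only [Matrix.add_apply, Matrix.smul_apply, Matrix.kroneckerMap_apply, sigmaMat, eA,
    tauMat, Matrix.of_apply, smul_eq_mul]
  have hhalf : ((1/2 : ℝ) : ℂ) = (2 : ℂ)⁻¹ := by norm_num
  fin_cases a <;> fin_cases a' <;> fin_cases b <;> fin_cases b' <;>
    simp [hhalf] <;> ring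

lemma omega_psd (ψ : Fin 2 → (r × s) → ℂ) : (bellOmega ψ).PosSemidef := by
  have h : bellOmega ψ = (Matrix.of fun (p : Fin 2 × (Fin 2 × r)) (v : s) =>
      bellPhi ψ (p.1, (p.2, v))) * (Matrix.of fun (p : Fin 2 × (Fin 2 × r)) (v : s) =>
      bellPhi ψ (p.1, (p.2, v)))ᴴ := by
    ext p q
    simp only [Matrix.mul_apply, Matrix.conjTranspose_apply, Matrix.of_apply, RCLike.star_def,
      bellOmega]
  rw [h]
  exact Matrix.posSemidef_self_mul_conjTranspose _

lemma omega_diag (ψ : Fin 2 → (r × s) → ℂ) (a b : Fin 2) (u : r) :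
    bellOmega ψ (a, (b, u)) (a, (b, u)) = if a = b then
      (2 : ℂ)⁻¹ * ∑ v, ψ a (u, v) * (starRingEnd ℂ) (ψ a (u, v)) else 0 := by
  rw [omega_apply]
  by_cases h : a = b
  · rw [if_pos ⟨h, h⟩, if_pos h]
  · rw [if_neg (fun hh => h hh.1), if_neg h]

lemma omega_trace (ρ : Fin 2 → Matrix s s ℂ) (ψ : Fin 2 → (r × s) → ℂ)
    (hρ : ∀ i, IsDensity (ρ i))
    (hpur : ∀ i v w, ρ i v w = ∑ u : r, ψ i (u, v) * (starRingEnd ℂ) (ψ i (u, w))) :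
    (bellOmega ψ).trace = 1 := by
  have h1 : (bellOmega ψ).trace = ∑ a : Fin 2, ∑ b : Fin 2, ∑ u : r,
      bellOmega ψ (a, (b, u)) (a, (b, u)) := by
    rw [Matrix.trace, Fintype.sum_prod_type]
    exact Finset.sum_congr rfl fun a _ => Fintype.sum_prod_type _
  rw [h1]
  have h2 : ∀ a : Fin 2, (∑ b : Fin 2, ∑ u : r, bellOmega ψ (a, (b, u)) (a, (b, u)))
      = (2 : ℂ)⁻¹ := by
    intro a
    rw [Finset.sum_eq_single a ?hz ?hm]
    · rw [Finset.sum_congr rfl (fun u (_ : u ∈ Finset.univ) => omega_diag ψ a a u)]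
      rw [Finset.sum_congr rfl (fun u (_ : u ∈ Finset.univ) => if_pos rfl), ← Finset.mul_sum,
        sum_diag ρ ψ hρ hpur a, mul_one]
    case hz =>
      intro b _ hb
      apply Finset.sum_eq_zero
      intro u _
      rw [omega_diag, if_neg (fun h => hb h.symm)]
    case hm =>
      intro h
      exact absurd (Finset.mem_univ _) h
  rw [Finset.sum_congr rfl fun a _ => h2 a, Fin.sum_univ_two]
  norm_num

lemma sigma_psd (ψ : Fin 2 → (r × s) → ℂ) : (sigmaMat ψ).PosSemidef := by
  set G : Fin 2 → Matrix (Fin 2 × (Fin 2 × r)) s ℂ := fun i =>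
    Matrix.of fun p v => if p.1 = i ∧ p.2.1 = i then ψ i (p.2.2, v) else 0 with hGdef
  have hGapp : ∀ (i : Fin 2) (p q : Fin 2 × (Fin 2 × r)), (G i * (G i)ᴴ) p q
      = if p.1 = i ∧ p.2.1 = i ∧ q.1 = i ∧ q.2.1 = i then
          ∑ v, ψ i (p.2.2, v) * (starRingEnd ℂ) (ψ i (q.2.2, v)) else 0 := by
    intro i p q
    simp only [Matrix.mul_apply, Matrix.conjTranspose_apply, hGdef, Matrix.of_apply,
      RCLike.star_def]
    by_cases h1 : p.1 = i ∧ p.2.1 = i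
    · by_cases h2 : q.1 = i ∧ q.2.1 = i
      · rw [if_pos ⟨h1.1, h1.2, h2.1, h2.2⟩]
        refine Finset.sum_congr rfl fun v _ => by rw [if_pos h1, if_pos h2]
      · rw [if_neg (fun h => h2 ⟨h.2.2.1, h.2.2.2⟩)]
        apply Finset.sum_eq_zero
        intro v _
        rw [if_neg h2, map_zero, mul_zero]
    · rw [if_neg (fun h => h1 ⟨h.1, h.2.1⟩)]
      apply Finset.sum_eq_zero
      intro v _
      rw [if_neg h1, zero_mul]
  have hsum : sigmaMat ψ = ((2 : ℂ))⁻¹ • (G 0 * (G 0)ᴴ + G 1 * (G 1)ᴴ) := by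
    ext p q
    obtain ⟨a, b, u⟩ := p
    obtain ⟨a', b', u'⟩ := q
    rw [Matrix.smul_apply, Matrix.add_apply, hGapp, hGapp]
    simp only [sigmaMat, Matrix.of_apply, smul_eq_mul]
    fin_cases a <;> fin_cases a' <;> fin_cases b <;> fin_cases b' <;> simp
  rw [hsum]
  exact half_psd ((Matrix.posSemidef_self_mul_conjTranspose _).add
    (Matrix.posSemidef_self_mul_conjTranspose _))

lemma split_lemma (ψ : Fin 2 → (r × s) → ℂ) :
    bellOmega ψ - sigmaMat ψ
      = emb (r := r) 0 * (Matrix.of fun u u' : r =>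
          (2:ℂ)⁻¹ * ∑ v, ψ 0 (u, v) * (starRingEnd ℂ) (ψ 1 (u', v))) * (emb (r := r) 1)ᴴ
      + emb (r := r) 1 * (Matrix.of fun u u' : r =>
          (2:ℂ)⁻¹ * ∑ v, ψ 1 (u, v) * (starRingEnd ℂ) (ψ 0 (u', v))) * (emb (r := r) 0)ᴴ := by
  ext p q
  obtain ⟨a, b, u⟩ := p
  obtain ⟨a', b', u'⟩ := q
  rw [Matrix.sub_apply, Matrix.add_apply, omega_apply, sandwich_apply, sandwich_apply]
  simp only [sigmaMat, Matrix.of_apply]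
  fin_cases a <;> fin_cases a' <;> fin_cases b <;> fin_cases b' <;> simp

lemma sigma_trace (ρ : Fin 2 → Matrix s s ℂ) (ψ : Fin 2 → (r × s) → ℂ)
    (hρ : ∀ i, IsDensity (ρ i))
    (hpur : ∀ i v w, ρ i v w = ∑ u : r, ψ i (u, v) * (starRingEnd ℂ) (ψ i (u, w))) :
    (sigmaMat ψ).trace = 1 := by
  have h := congrArg Matrix.trace (split_lemma ψ)
  rw [Matrix.trace_sub, Matrix.trace_add] at h
  have hD : ∀ (a a' : Fin 2) (M : Matrix r r ℂ), a ≠ a' →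
      (emb (r := r) a * M * (emb (r := r) a')ᴴ).trace = 0 := by
    intro a a' M hne
    rw [Matrix.trace]
    apply Finset.sum_eq_zero
    intro p _
    rw [Matrix.diag, sandwich_apply, if_neg (fun hcon => hne (hcon.1.symm.trans hcon.2.2.1))]
  rw [hD 0 1 _ (by decide), hD 1 0 _ (by decide), add_zero] at h
  have := omega_trace ρ ψ hρ hpur
  rw [sub_eq_zero] at h
  rw [← h, this]


end Core

end QAux

theorem qsd_yes_to_qsep_yes {r s : Type*} [Fintype r] [Fintype s] [DecidableEq r]
    [DecidableEq s] (ε : ℝ) (hε : 0 ≤ ε) (ρ : Fin 2 → Matrix s s ℂ)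
    (ψ : Fin 2 → (r × s) → ℂ) (hρ : ∀ i, IsDensity (ρ i))
    (hpur : ∀ i v w, ρ i v w = ∑ u : r, ψ i (u, v) * (starRingEnd ℂ) (ψ i (u, w)))
    (hdist : 2 - ε ≤ traceNorm (ρ 0 - ρ 1)) :
    ∃ σ : Matrix (Fin 2 × (Fin 2 × r)) (Fin 2 × (Fin 2 × r)) ℂ,
      SeparableState σ ∧ traceNorm (bellOmega ψ - σ) ≤ 2 * Real.sqrt ε := by
  classical
  refine ⟨QAux.sigmaMat ψ, QAux.sigma_separable ρ ψ hρ hpur, ?_⟩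
  by_cases hε1 : 1 ≤ ε
  · have hsqrt1 : 1 ≤ Real.sqrt ε := by
      rw [show (1:ℝ) = Real.sqrt 1 from (Real.sqrt_one).symm]
      exact Real.sqrt_le_sqrt hε1
    have hωt : traceNorm (bellOmega ψ) = 1 := by
      rw [QAux.traceNorm_psd (QAux.omega_psd ψ), QAux.omega_trace ρ ψ hρ hpur]
      simp
    have hσt : traceNorm (QAux.sigmaMat ψ) = 1 := by
      rw [QAux.traceNorm_psd (QAux.sigma_psd ψ), QAux.sigma_trace ρ ψ hρ hpur]
      simp
    calc traceNorm (bellOmega ψ - QAux.sigmaMat ψ)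
        = traceNorm (bellOmega ψ + -(QAux.sigmaMat ψ)) := by rw [sub_eq_add_neg]
      _ ≤ traceNorm (bellOmega ψ) + traceNorm (-(QAux.sigmaMat ψ)) :=
          QAux.traceNorm_triangle _ _
      _ = 1 + 1 := by rw [hωt, QAux.traceNorm_neg, hσt]
      _ ≤ 2 * Real.sqrt ε := by linarith
  · push_neg at hε1
    set K : Matrix r r ℂ := Matrix.of (fun u' u : r =>
      ∑ v : s, ψ 1 (u', v) * (starRingEnd ℂ) (ψ 0 (u, v))) with hKdef
    set M01 : Matrix r r ℂ := Matrix.of (fun u u' : r =>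
      (2:ℂ)⁻¹ * ∑ v, ψ 0 (u, v) * (starRingEnd ℂ) (ψ 1 (u', v))) with hM01def
    set M10 : Matrix r r ℂ := Matrix.of (fun u u' : r =>
      (2:ℂ)⁻¹ * ∑ v, ψ 1 (u, v) * (starRingEnd ℂ) (ψ 0 (u', v))) with hM10def
    have hM01K : M01 = (2:ℂ)⁻¹ • Kᴴ := by
      ext u u'
      simp only [hM01def, Matrix.of_apply, Matrix.smul_apply, Matrix.conjTranspose_apply,
        hKdef, smul_eq_mul, RCLike.star_def, map_sum, _root_.map_mul, Complex.conj_conj]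
      congr 1
      exact Finset.sum_congr rfl fun v _ => by ring
    have hM10K : M10 = (2:ℂ)⁻¹ • K := by
      ext u u'
      simp only [hM10def, Matrix.of_apply, Matrix.smul_apply, hKdef, smul_eq_mul]
    have habs2 : ‖((2:ℂ)⁻¹)‖ = 2⁻¹ := by
      rw [norm_inv]
      norm_num
    have hb10 : traceNorm M10 ≤ 2⁻¹ * Real.sqrt ε := by
      obtain ⟨V, hV1, hV2, hVtr⟩ := QAux.exists_unitary_trace M10
      have heq : traceNorm M10 = ‖(V * M10).trace‖ := by
        rw [hVtr, Complex.norm_real, Real.norm_of_nonneg (QAux.traceNorm_nonneg'' _)]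
      rw [heq, hM10K, Matrix.mul_smul, Matrix.trace_smul, smul_eq_mul, norm_mul,
        habs2]
      exact mul_le_mul_of_nonneg_left
        (QAux.core_bound ε ρ ψ hρ hpur hdist hε1 V hV1) (by norm_num)
    have hb01 : traceNorm M01 ≤ 2⁻¹ * Real.sqrt ε := by
      obtain ⟨V, hV1, hV2, hVtr⟩ := QAux.exists_unitary_trace M01
      have heq : traceNorm M01 = ‖(V * M01).trace‖ := by
        rw [hVtr, Complex.norm_real, Real.norm_of_nonneg (QAux.traceNorm_nonneg'' _)]
      rw [heq, hM01K, Matrix.mul_smul, Matrix.trace_smul, smul_eq_mul, norm_mul,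
        habs2]
      have h1 : (K * Vᴴ).trace = star ((V * Kᴴ).trace) := by
        rw [← Matrix.trace_conjTranspose, Matrix.conjTranspose_mul,
          Matrix.conjTranspose_conjTranspose]
      have h2 : ‖(V * Kᴴ).trace‖ = ‖(Vᴴ * K).trace‖ := by
        calc ‖(V * Kᴴ).trace‖
            = ‖(starRingEnd ℂ) ((V * Kᴴ).trace)‖ := (Complex.norm_conj _).symm
          _ = ‖(K * Vᴴ).trace‖ := by rw [← RCLike.star_def, ← h1]
          _ = ‖(Vᴴ * K).trace‖ := by rw [Matrix.trace_mul_comm]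
      rw [h2]
      refine mul_le_mul_of_nonneg_left
        (QAux.core_bound ε ρ ψ hρ hpur hdist hε1 Vᴴ ?_) (by norm_num)
      rw [Matrix.conjTranspose_conjTranspose, hV2]
    calc traceNorm (bellOmega ψ - QAux.sigmaMat ψ)
        = traceNorm (QAux.emb (r := r) 0 * M01 * (QAux.emb (r := r) 1)ᴴ + QAux.emb (r := r) 1 * M10 * (QAux.emb (r := r) 0)ᴴ) := by
          rw [QAux.split_lemma ψ]
      _ ≤ traceNorm (QAux.emb (r := r) 0 * M01 * (QAux.emb (r := r) 1)ᴴ)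
            + traceNorm (QAux.emb (r := r) 1 * M10 * (QAux.emb (r := r) 0)ᴴ) := QAux.traceNorm_triangle _ _
      _ = traceNorm M01 + traceNorm M10 := by
          rw [QAux.traceNorm_iso _ _ (QAux.emb_isometry 0) (QAux.emb_isometry 1),
            QAux.traceNorm_iso _ _ (QAux.emb_isometry 1) (QAux.emb_isometry 0)]
      _ ≤ 2⁻¹ * Real.sqrt ε + 2⁻¹ * Real.sqrt ε := add_le_add hb01 hb10
      _ ≤ 2 * Real.sqrt ε := by nlinarith [Real.sqrt_nonneg ε]
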